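/- For geodesics of g = ds² + tanh²(s)dθ² with conserved quantities ℓ ≠ 0 and k > ℓ², the radial evolution satisfies cosh(s(σ)) = √(k/(k-ℓ²))·cosh(√(k-ℓ²)·σ) (after a shift of the affine parameter σ); in particular s(σ) → ∞ as σ → ±∞, and the minimal value s_min satisfies coth²(s_min) = k/ℓ². -/

import Mathlib

open Real Filter

open Set

lemma hasDerivAt_tanh' (x : ℝ) : HasDerivAt Real.tanh (1 / Real.cosh x ^ 2) x := by
  have h := (Real.hasDerivAt_sinh x).div (Real.hasDerivAt_cosh x) (Real.cosh_pos x).ne'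
  have he : (Real.sinh / Real.cosh) = Real.tanh :=
    funext fun y => (Real.tanh_eq_sinh_div_cosh y).symm
  rw [he] at h
  refine h.congr_deriv (Eq.symm ?_)
  have := Real.cosh_sq_sub_sinh_sq x
  field_simp
  linarith

lemma tendsto_cosh_atTop' : Tendsto Real.cosh atTop atTop := by
  apply tendsto_atTop_mono (fun x => ?_) (Real.tendsto_exp_atTop.atTop_div_const two_pos)
  rw [Real.cosh_eq]
  have := Real.exp_pos (-x)
  linarith

lemma tendsto_cosh_atBot' : Tendsto Real.cosh atBot atTop := by
  have := tendsto_cosh_atTop'.comp tendsto_neg_atBot_atTop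
  simpa [Function.comp_def, Real.cosh_neg] using this

lemma ode_global {v : (ℝ × ℝ) → (ℝ × ℝ)} {K : NNReal} (hv : LipschitzWith K v)
    {f g : ℝ → ℝ × ℝ} (hf : ∀ t, HasDerivAt f (v (f t)) t)
    (hg : ∀ t, HasDerivAt g (v (g t)) t) {t₀ : ℝ} (heq : f t₀ = g t₀) (t : ℝ) : f t = g t := by
  have h := ODE_solution_unique_of_mem_Ioo (v := fun _ => v) (s := fun _ => (univ : Set (ℝ × ℝ)))
    (K := K) (fun _ _ => hv.lipschitzOnWith) (t₀ := t₀) (a := min t t₀ - 1) (b := max t t₀ + 1)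
    ⟨by have := min_le_right t t₀; linarith, by have := le_max_right t t₀; linarith⟩
    (fun t' _ => ⟨hf t', mem_univ _⟩) (fun t' _ => ⟨hg t', mem_univ _⟩) heq
  exact h ⟨by have := min_le_left t t₀; linarith, by have := le_max_left t t₀; linarith⟩

noncomputable section

/-- For a geodesic `γ(σ) = (s(σ), θ(σ))` of the cigar metric
`ds² + tanh²(s)dθ²` with conserved quantities `ℓ = tanh²(s)θ̇ ≠ 0` and
`k = ṡ² + tanh²(s)θ̇² > ℓ²`, after a shift of the affine parameter,
`cosh(s(σ)) = √(k/(k-ℓ²)) cosh(√(k-ℓ²) σ)`; in particular `s(σ) → ∞` as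
`σ → ±∞`, and the minimal value `s_min = s(σ₀)` satisfies `coth²(s_min) = k/ℓ²`. -/
theorem geodesic_radial_evolution (s θ : ℝ → ℝ) (ℓ k : ℝ)
    (hs : ContDiff ℝ 2 s) (hθ : ContDiff ℝ 2 θ)
    (hspos : ∀ σ : ℝ, 0 < s σ)
    (hgeo1 : ∀ σ : ℝ, deriv (deriv s) σ
        = Real.tanh (s σ) * deriv Real.tanh (s σ) * (deriv θ σ) ^ 2)
    (hgeo2 : ∀ σ : ℝ, deriv (deriv θ) σ
        = -2 * (deriv Real.tanh (s σ) / Real.tanh (s σ)) * deriv s σ * deriv θ σ)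
    (hℓ : ∀ σ : ℝ, Real.tanh (s σ) ^ 2 * deriv θ σ = ℓ)
    (hk : ∀ σ : ℝ, (deriv s σ) ^ 2 + Real.tanh (s σ) ^ 2 * (deriv θ σ) ^ 2 = k)
    (hℓ0 : ℓ ≠ 0) (hkℓ : ℓ ^ 2 < k) :
    ∃ σ₀ : ℝ,
      (∀ σ : ℝ, Real.cosh (s σ)
          = Real.sqrt (k / (k - ℓ ^ 2)) * Real.cosh (Real.sqrt (k - ℓ ^ 2) * (σ - σ₀))) ∧
      Tendsto s atTop atTop ∧ Tendsto s atBot atTop ∧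
      (1 / Real.tanh (s σ₀)) ^ 2 = k / ℓ ^ 2 ∧
      (∀ σ : ℝ, s σ₀ ≤ s σ) := by
  have hl2 : (0:ℝ) < ℓ ^ 2 := by positivity
  have hd : (0:ℝ) < k - ℓ ^ 2 := by linarith
  have hk0 : (0:ℝ) < k := by linarith
  set ω := Real.sqrt (k - ℓ ^ 2) with hωdef
  have hωpos : 0 < ω := Real.sqrt_pos.mpr hd
  have hωsq : ω ^ 2 = k - ℓ ^ 2 := Real.sq_sqrt hd.le
  -- differentiability
  have hs2 : ContDiff ℝ ((1 : ℕ) + 1) s := by exact_mod_cast hs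
  have H := contDiff_succ_iff_deriv.mp hs2
  have hs1 : Differentiable ℝ s := H.1
  have hs'd : Differentiable ℝ (deriv s) := H.2.2.differentiable (by norm_num)
  -- positivity
  have hch : ∀ σ, 0 < Real.cosh (s σ) := fun σ => Real.cosh_pos _
  have hsh : ∀ σ, 0 < Real.sinh (s σ) := fun σ => Real.sinh_pos_iff.mpr (hspos σ)
  have htanh : ∀ σ, Real.tanh (s σ) = Real.sinh (s σ) / Real.cosh (s σ) :=
    fun σ => Real.tanh_eq_sinh_div_cosh _
  -- θ' formula
  have hθ' : ∀ σ, deriv θ σ = ℓ * Real.cosh (s σ) ^ 2 / Real.sinh (s σ) ^ 2 := by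
    intro σ
    have h := hℓ σ
    rw [htanh σ] at h
    have h1 := (hsh σ).ne'
    have h2 := (hch σ).ne'
    field_simp at h ⊢
    linear_combination h
  -- s'² formula
  have hs'sq : ∀ σ, (deriv s σ) ^ 2
      = k - ℓ ^ 2 * Real.cosh (s σ) ^ 2 / Real.sinh (s σ) ^ 2 := by
    intro σ
    have h1 : Real.tanh (s σ) ^ 2 * (deriv θ σ) ^ 2 = ℓ * deriv θ σ := by
      rw [← hℓ σ]; ring
    have h := hk σ
    rw [h1, hθ' σ] at h
    have h2 := (hsh σ).ne'
    linear_combination h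
  -- s'' formula
  have hs'' : ∀ σ, deriv (deriv s) σ = ℓ ^ 2 * Real.cosh (s σ) / Real.sinh (s σ) ^ 3 := by
    intro σ
    have h := hgeo1 σ
    rw [(hasDerivAt_tanh' (s σ)).deriv, htanh σ, hθ' σ] at h
    rw [h]
    have h1 := (hsh σ).ne'
    have h2 := (hch σ).ne'
    field_simp
  set u : ℝ → ℝ := fun σ => Real.cosh (s σ) with hudef
  set u' : ℝ → ℝ := fun σ => Real.sinh (s σ) * deriv s σ with hu'def
  have hud : ∀ σ, HasDerivAt u (u' σ) σ := fun σ => ((hs1 σ).hasDerivAt).cosh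
  have hpy : ∀ σ : ℝ, Real.cosh (s σ) ^ 2 - Real.sinh (s σ) ^ 2 = 1 :=
    fun σ => Real.cosh_sq_sub_sinh_sq _
  have hu'd : ∀ σ, HasDerivAt u' ((k - ℓ ^ 2) * u σ) σ := by
    intro σ
    have h1 : HasDerivAt (fun σ => Real.sinh (s σ)) (Real.cosh (s σ) * deriv s σ) σ :=
      ((hs1 σ).hasDerivAt).sinh
    have h2 : HasDerivAt (deriv s) (deriv (deriv s) σ) σ := (hs'd σ).hasDerivAt
    have h := h1.mul h2
    refine h.congr_deriv (Eq.symm ?_)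
    rw [hs'' σ]
    have hmm : Real.cosh (s σ) * deriv s σ * deriv s σ = Real.cosh (s σ) * (deriv s σ)^2 := by
      ring
    rw [hmm, hs'sq σ]
    have h3 := (hsh σ).ne'
    have h4 := hpy σ
    simp only [hudef]
    field_simp
    linear_combination (ℓ ^ 2) * h4
  -- first integral
  have hB : ∀ σ, u' σ ^ 2 = (k - ℓ ^ 2) * u σ ^ 2 - k := by
    intro σ
    simp only [hu'def, hudef]
    rw [mul_pow, hs'sq σ]
    have h3 := (hsh σ).ne'
    have h4 := hpy σ
    field_simp
    linear_combination (-k) * h4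
  -- continuity of u'
  have hu'cont : Continuous u' := by
    simp only [hu'def]
    exact (Real.continuous_sinh.comp hs1.continuous).mul hs'd.continuous
  -- mean value bound
  have hmono : ∀ a b : ℝ, a < b → (k - ℓ ^ 2) * (b - a) ≤ u' b - u' a := by
    intro a b hab
    obtain ⟨c, -, hc⟩ := exists_hasDerivAt_eq_slope u' (fun σ => (k - ℓ ^ 2) * u σ) hab
      hu'cont.continuousOn (fun x _ => hu'd x)
    rw [eq_div_iff (sub_ne_zero.mpr hab.ne')] at hc
    have h1 : 1 ≤ u c := Real.one_le_cosh _
    nlinarith [mul_nonneg (mul_pos hd (sub_pos.mpr hab)).le (by linarith : (0:ℝ) ≤ u c - 1)]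
  -- find σ₀ with u' σ₀ = 0
  obtain ⟨σ₀, -, hσ₀⟩ : ∃ σ₀ ∈ Icc (-((|u' 0| + 1) / (k - ℓ ^ 2))) ((|u' 0| + 1) / (k - ℓ ^ 2)),
      u' σ₀ = 0 := by
    set b0 := (|u' 0| + 1) / (k - ℓ ^ 2) with hb0def
    have hb0 : 0 < b0 := by positivity
    have hmul : (k - ℓ ^ 2) * b0 = |u' 0| + 1 := by
      rw [hb0def, mul_div_cancel₀ _ hd.ne']
    have hub : 0 < u' b0 := by
      have := hmono 0 b0 hb0
      have h2 := neg_abs_le (u' 0)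
      rw [sub_zero, hmul] at this
      linarith
    have hlb : u' (-b0) < 0 := by
      have := hmono (-b0) 0 (by linarith)
      have h2 := le_abs_self (u' 0)
      have h3 : (0 : ℝ) - -b0 = b0 := by ring
      rw [h3, hmul] at this
      linarith
    have him := intermediate_value_Icc (by linarith : -b0 ≤ b0) hu'cont.continuousOn
    have h0 : (0:ℝ) ∈ Icc (u' (-b0)) (u' b0) := ⟨hlb.le, hub.le⟩
    obtain ⟨σ₀, hmem, heq⟩ := him h0
    exact ⟨σ₀, hmem, heq⟩
  -- value at σ₀
  have husqP : u σ₀ ^ 2 * (k - ℓ ^ 2) = k := by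
    have h := hB σ₀
    rw [hσ₀] at h
    nlinarith
  have hupos : 0 < u σ₀ := hch σ₀
  set A := Real.sqrt (k / (k - ℓ ^ 2)) with hAdef
  have hApos : 0 < A := Real.sqrt_pos.mpr (by positivity)
  have hA : u σ₀ = A := by
    have husq : u σ₀ ^ 2 = k / (k - ℓ ^ 2) := by
      field_simp
      linarith [husqP]
    rw [hAdef, ← husq, Real.sqrt_sq hupos.le]
  -- the comparison solution
  set φ : ℝ → ℝ := fun σ => A * Real.cosh (ω * (σ - σ₀)) with hφdef
  set φ' : ℝ → ℝ := fun σ => A * ω * Real.sinh (ω * (σ - σ₀)) with hφ'def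
  have hinner : ∀ σ : ℝ, HasDerivAt (fun σ : ℝ => ω * (σ - σ₀)) ω σ := by
    intro σ
    simpa using ((hasDerivAt_id σ).sub_const σ₀).const_mul ω
  have hφd : ∀ σ, HasDerivAt φ (φ' σ) σ := by
    intro σ
    have h := ((hinner σ).cosh).const_mul A
    simp only [hφdef, hφ'def]
    refine h.congr_deriv (Eq.symm ?_)
    ring
  have hφ'd : ∀ σ, HasDerivAt φ' ((k - ℓ ^ 2) * φ σ) σ := by
    intro σ
    have h := ((hinner σ).sinh).const_mul (A * ω)
    simp only [hφdef, hφ'def]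
    refine h.congr_deriv (Eq.symm ?_)
    rw [← hωsq]
    ring
  -- ODE uniqueness
  set L : ℝ × ℝ →L[ℝ] ℝ × ℝ :=
    (ContinuousLinearMap.snd ℝ ℝ ℝ).prod ((k - ℓ ^ 2) • ContinuousLinearMap.fst ℝ ℝ ℝ) with hLdef
  have hL : ∀ p : ℝ × ℝ, L p = (p.2, (k - ℓ ^ 2) * p.1) := fun p => rfl
  have hFd : ∀ t, HasDerivAt (fun t => (u t, u' t)) (L ((u t, u' t))) t := by
    intro t
    rw [hL]
    exact (hud t).prodMk (hu'd t)
  have hGd : ∀ t, HasDerivAt (fun t => (φ t, φ' t)) (L ((φ t, φ' t))) t := by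
    intro t
    rw [hL]
    exact (hφd t).prodMk (hφ'd t)
  have heq0 : (u σ₀, u' σ₀) = (φ σ₀, φ' σ₀) := by
    simp only [hσ₀, hA, hφdef, hφ'def, sub_self, mul_zero, Real.cosh_zero, Real.sinh_zero,
      mul_one]
  have hkey : ∀ t : ℝ, u t = φ t := by
    intro t
    have h := ode_global (v := fun p => L p) L.lipschitz hFd hGd heq0 t
    exact congrArg Prod.fst h
  -- tendsto lemmas
  have hsTendsto : ∀ (l : Filter ℝ), Tendsto (fun σ => ω * (σ - σ₀)) l atTop ∨
      Tendsto (fun σ => ω * (σ - σ₀)) l atBot →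
      True := fun _ _ => trivial
  have hcomp_top : Tendsto (fun σ : ℝ => Real.cosh (s σ)) atTop atTop := by
    have h1 : Tendsto (fun σ : ℝ => ω * (σ - σ₀)) atTop atTop := by
      apply Tendsto.const_mul_atTop hωpos
      simpa [sub_eq_add_neg] using tendsto_atTop_add_const_right atTop (-σ₀) tendsto_id
    have h2 : Tendsto φ atTop atTop := by
      simp only [hφdef]
      exact (tendsto_cosh_atTop'.comp h1).const_mul_atTop hApos
    have : (fun σ : ℝ => Real.cosh (s σ)) = φ := funext hkey
    rw [this]; exact h2
  have hcomp_bot : Tendsto (fun σ : ℝ => Real.cosh (s σ)) atBot atTop := by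
    have h1 : Tendsto (fun σ : ℝ => ω * (σ - σ₀)) atBot atBot := by
      apply Tendsto.const_mul_atBot hωpos
      simpa [sub_eq_add_neg] using tendsto_atBot_add_const_right atBot (-σ₀) tendsto_id
    have h2 : Tendsto φ atBot atTop := by
      simp only [hφdef]
      exact (tendsto_cosh_atBot'.comp h1).const_mul_atTop hApos
    have : (fun σ : ℝ => Real.cosh (s σ)) = φ := funext hkey
    rw [this]; exact h2
  have habs : ∀ {l : Filter ℝ}, Tendsto (fun σ : ℝ => Real.cosh (s σ)) l atTop →
      Tendsto s l atTop := by
    intro l hl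
    rw [tendsto_atTop]
    intro M
    filter_upwards [(tendsto_atTop.mp hl) (Real.cosh |M|)] with σ hσ
    have h1 : |M| ≤ |s σ| := by
      have := Real.cosh_le_cosh.mp hσ
      rwa [abs_abs] at this
    calc M ≤ |M| := le_abs_self M
    _ ≤ |s σ| := h1
    _ = s σ := abs_of_pos (hspos σ)
  refine ⟨σ₀, hkey, habs hcomp_top, habs hcomp_bot, ?_, ?_⟩
  · -- coth identity
    rw [htanh σ₀]
    have h3 := (hsh σ₀).ne'
    have h4 := (hch σ₀).ne'
    have h5 := hpy σ₀
    field_simp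
    linear_combination (-1 : ℝ) * husqP + k * h5
  · -- minimality
    intro σ
    have h1 : Real.cosh (s σ₀) ≤ Real.cosh (s σ) := by
      have h2 : u σ₀ ≤ u σ := by
        rw [hA, hkey σ]
        simp only [hφdef]
        exact le_mul_of_one_le_right hApos.le (Real.one_le_cosh _)
      exact h2
    have := Real.cosh_le_cosh.mp h1
    rwa [abs_of_pos (hspos σ₀), abs_of_pos (hspos σ)] at this
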